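/- Let C be a linear code of length n over a finite commutative Frobenius ring R, and let F = (F_0, F_1, …, F_t) be a tuple of non-empty subsets of {0, 1, …, t}. Let P^F be the (t+1)×(t+1) matrix with (i,j) entry 1 if j ∈ F_i and 0 otherwise. Then, as an identity of polynomials in the variables y_{iℓ} (i ∈ {0,…,t}, ℓ ∈ {1,…,n}), sse_C(P^F Y) = Σ_{X ⊆ t·[n]} B^F_C(X) · ∏_{i=0}^t ∏_{ℓ ∈ M_i(X)} y_{iℓ}, where the sum runs over all submultisets X of t·[n]. -/
import Mathlib


noncomputable section
open scoped BigOperators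

/-- The dual of a linear code `C ⊆ Rⁿ` with respect to the standard inner
product `u·v = ∑ ℓ, u ℓ * v ℓ`. -/
def dualCode {R : Type*} [CommRing R] {n : ℕ} (C : Submodule R (Fin n → R)) :
    Submodule R (Fin n → R) where
  carrier := {v | ∀ u ∈ C, ∑ ℓ, u ℓ * v ℓ = 0}
  add_mem' := by
    intro v w hv hw u hu
    simp only [Set.mem_setOf_eq] at *
    have h1 := hv u hu
    have h2 := hw u hu
    simp only [Pi.add_apply, mul_add, Finset.sum_add_distrib, h1, h2, add_zero]
  zero_mem' := by
    intro u hu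
    simp
  smul_mem' := by
    intro c v hv u hu
    simp only [Set.mem_setOf_eq] at *
    have h := hv u hu
    have : ∑ ℓ, u ℓ * (c • v) ℓ = c * ∑ ℓ, u ℓ * v ℓ := by
      rw [Finset.mul_sum]
      exact Finset.sum_congr rfl fun ℓ _ => by
        simp only [Pi.smul_apply, smul_eq_mul]; ring
    rw [this, h, mul_zero]

/-- A finite commutative ring is Frobenius iff `|C|·|C⊥| = |R|ⁿ` for every
linear code `C` of every length `n` over `R`. -/
def IsFrobeniusRing (R : Type*) [CommRing R] [Fintype R] : Prop :=
  ∀ (n : ℕ) (C : Submodule R (Fin n → R)),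
    Nat.card C * Nat.card (dualCode C) = Fintype.card R ^ n

open MvPolynomial Classical

/-- The symmetrized support enumerator
`sse_C = ∑_{c ∈ C} ∏_{ℓ} x_{i_c(ℓ), ℓ}`, where `i_c(ℓ)` is the unique index
with `c_ℓ R = a_{i_c(ℓ)} R`; the variable `X (i, ℓ)` plays the role of
`x_{iℓ}`. -/
def sse {R : Type*} [CommRing R] [Fintype R] {t n : ℕ} (a : Fin (t + 1) → R)
    (C : Submodule R (Fin n → R)) : MvPolynomial (Fin (t + 1) × Fin n) ℚ :=
  haveI : Fintype C := Fintype.ofFinite C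
  ∑ c : C, ∏ ℓ : Fin n, ∏ i : Fin (t + 1),
    if Ideal.span {(c : Fin n → R) ℓ} = Ideal.span {a i} then X (i, ℓ) else 1

/-- For a tuple `F = (F₀, …, F_t)` of subsets of `{0, …, t}` and a submultiset
`X ⊆ t·[n]` (identified with its multiplicity function `m : [n] → {0, …, t}`),
`B^F_C(X) = |{c ∈ C : S_i(c) ⊆ ∪_{j ∈ F_i} M_j(X) for all i}|`. -/
def BF {R : Type*} [CommRing R] {t n : ℕ} (a : Fin (t + 1) → R)
    (C : Submodule R (Fin n → R)) (F : Fin (t + 1) → Set (Fin (t + 1)))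
    (m : Fin n → Fin (t + 1)) : ℕ :=
  Nat.card {c : C // ∀ (i : Fin (t + 1)) (ℓ : Fin n),
    Ideal.span {(c : Fin n → R) ℓ} = Ideal.span {a i} → m ℓ ∈ F i}

/-- for any tuple `F` of non-empty subsets of `{0, …, t}`,
`sse_C(P^F Y) = ∑_{X ⊆ t·[n]} B^F_C(X) ∏ᵢ ∏_{ℓ ∈ M_i(X)} y_{iℓ}`. -/
theorem stmt13 {R : Type*} [CommRing R] [Fintype R] (hR : IsFrobeniusRing R)
    {t : ℕ} (a : Fin (t + 1) → R)
    (hrep : ∀ r : R, ∃ i, Ideal.span {r} = Ideal.span {a i})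
    (hinj : ∀ i j, Ideal.span {a i} = Ideal.span {a j} → i = j)
    {n : ℕ} (C : Submodule R (Fin n → R))
    (F : Fin (t + 1) → Set (Fin (t + 1))) (hF : ∀ i, (F i).Nonempty)
    (P : Matrix (Fin (t + 1)) (Fin (t + 1)) ℚ)
    (hP : ∀ i j, P i j = if j ∈ F i then 1 else 0) :
    (MvPolynomial.bind₁ (fun p : Fin (t + 1) × Fin n =>
        ∑ j : Fin (t + 1), MvPolynomial.C (P p.1 j) * X (j, p.2))) (sse a C) =
      ∑ m : Fin n → Fin (t + 1),
        MvPolynomial.C ((BF a C F m : ℚ)) * ∏ ℓ : Fin n, X (m ℓ, ℓ) := by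
  classical
  haveI : Fintype C := Fintype.ofFinite C
  have hidx_spec : ∀ r : R, Ideal.span {r} = Ideal.span {a (hrep r).choose} :=
    fun r => (hrep r).choose_spec
  have hidx_unique : ∀ (r : R) (i : Fin (t + 1)),
      Ideal.span {r} = Ideal.span {a i} → i = (hrep r).choose := by
    intro r i h
    exact hinj i _ ((h.symm.trans (hidx_spec r)))
  have key : sse a C = ∑ c : C, ∏ ℓ : Fin n, X ((hrep ((c : Fin n → R) ℓ)).choose, ℓ) := by
    unfold sse
    refine Finset.sum_congr (by congr 1; exact Subsingleton.elim _ _)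
      fun c _ => Finset.prod_congr rfl fun ℓ _ => ?_
    rw [Finset.prod_eq_single ((hrep ((c : Fin n → R) ℓ)).choose)]
    · rw [if_pos (hidx_spec _)]
    · intro j _ hj
      rw [if_neg fun h => hj (hidx_unique _ _ h)]
    · exact fun h => absurd (Finset.mem_univ _) h
  rw [key, map_sum]
  have expand : ∀ c : C,
      (MvPolynomial.bind₁ (fun p : Fin (t + 1) × Fin n =>
        ∑ j : Fin (t + 1), MvPolynomial.C (P p.1 j) * X (j, p.2)))
        (∏ ℓ : Fin n, X ((hrep ((c : Fin n → R) ℓ)).choose, ℓ))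
      = ∑ m : Fin n → Fin (t + 1), ∏ ℓ : Fin n,
          (if m ℓ ∈ F ((hrep ((c : Fin n → R) ℓ)).choose) then X (m ℓ, ℓ) else 0) := by
    intro c
    rw [map_prod]
    have hX : ∀ ℓ : Fin n,
        (MvPolynomial.bind₁ (fun p : Fin (t + 1) × Fin n =>
          ∑ j : Fin (t + 1), MvPolynomial.C (P p.1 j) * X (j, p.2)))
          (X ((hrep ((c : Fin n → R) ℓ)).choose, ℓ))
        = ∑ j : Fin (t + 1),
            (if j ∈ F ((hrep ((c : Fin n → R) ℓ)).choose) then X (j, ℓ) else 0) := by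
      intro ℓ
      rw [MvPolynomial.bind₁_X_right]
      refine Finset.sum_congr rfl fun j _ => ?_
      rw [hP]
      split <;> simp
    rw [Finset.prod_congr rfl fun ℓ _ => hX ℓ, Finset.prod_univ_sum, Fintype.piFinset_univ]
  rw [Finset.sum_congr rfl fun c _ => expand c, Finset.sum_comm]
  refine Finset.sum_congr rfl fun m _ => ?_
  have hprod : ∀ c : C,
      (∏ ℓ : Fin n, if m ℓ ∈ F ((hrep ((c : Fin n → R) ℓ)).choose)
          then (X (m ℓ, ℓ) : MvPolynomial (Fin (t + 1) × Fin n) ℚ) else 0)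
      = if (∀ ℓ, m ℓ ∈ F ((hrep ((c : Fin n → R) ℓ)).choose))
          then ∏ ℓ : Fin n, X (m ℓ, ℓ) else 0 := by
    intro c
    split
    · next h => exact Finset.prod_congr rfl fun ℓ _ => if_pos (h ℓ)
    · next h =>
      push_neg at h
      obtain ⟨ℓ, hℓ⟩ := h
      exact Finset.prod_eq_zero (Finset.mem_univ ℓ) (if_neg hℓ)
  rw [Finset.sum_congr rfl fun c _ => hprod c, ← Finset.sum_filter, Finset.sum_const]
  have hcard : (Finset.univ.filter
      (fun c : C => ∀ ℓ, m ℓ ∈ F ((hrep ((c : Fin n → R) ℓ)).choose))).card = BF a C F m := by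
    rw [BF, Nat.card_eq_fintype_card, Fintype.card_subtype]
    congr 1
    ext c
    simp only [Finset.mem_filter, Finset.mem_univ, true_and]
    constructor
    · intro h i ℓ hspan
      rw [hidx_unique _ _ hspan]
      exact h ℓ
    · intro h ℓ
      exact h _ ℓ (hidx_spec _)
  rw [hcard, nsmul_eq_mul]
  rw [map_natCast (MvPolynomial.C : ℚ →+* MvPolynomial (Fin (t + 1) × Fin n) ℚ)]


end
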